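/- (Aubin–Lions lemma, part (i).) Let X, B, Y be Banach spaces, let i : X → B be an injective compact linear operator (i.e. a continuous linear map sending bounded subsets of X to relatively compact subsets of B), and let j : B → Y be an injective continuous linear operator. Let T > 0 and 1 ≤ p < ∞. Let 𝓕 be a family of strongly measurable functions f : [0,T] → X such that: (a) sup_{f ∈ 𝓕} ∫₀^T ‖f(t)‖_X^p dt < ∞; and (b) for every f ∈ 𝓕 there exists a Bochner-integrable function g_f : [0,T] → Y with j(i(f(t))) = j(i(f(0))) + ∫₀^t g_f(s) ds for all t ∈ [0,T], and sup_{f ∈ 𝓕} ∫₀^T ‖g_f(t)‖_Y dt < ∞. Then the family { i ∘ f : f ∈ 𝓕 } is relatively compact in the space L^p(0,T; B) of p-integrable B-valued functions. -/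

import Mathlib

open MeasureTheory
open scoped ENNReal

section helpers

lemma sum_indicator_eval {E : Type*} [AddCommMonoid E] {m : ℕ} {I : Fin m → Set ℝ}
    (hd : ∀ k l, k ≠ l → Disjoint (I k) (I l)) (a : Fin m → E) {k : Fin m} {t : ℝ}
    (ht : t ∈ I k) :
    (∑ l, (I l).indicator (fun _ => a l) t) = a k := by
  rw [Finset.sum_eq_single k]
  · exact Set.indicator_of_mem ht _
  · intro l _ hlk
    apply Set.indicator_of_notMem
    exact fun htl => Set.disjoint_left.1 (hd l k hlk) htl ht
  · intro hk; exact absurd (Finset.mem_univ k) hk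

lemma sum_indicator_eval_zero {E : Type*} [AddCommMonoid E] {m : ℕ} {I : Fin m → Set ℝ}
    (a : Fin m → E) {t : ℝ} (ht : ∀ k, t ∉ I k) :
    (∑ l, (I l).indicator (fun _ => a l) t) = 0 := by
  apply Finset.sum_eq_zero
  intro l _
  exact Set.indicator_of_notMem (ht l) _

lemma step_eLpNorm_le {m : ℕ} {I : Fin m → Set ℝ} (hI : ∀ k, MeasurableSet (I k))
    (hd : ∀ k l, k ≠ l → Disjoint (I k) (I l)) (a : Fin m → ℝ) {μ : Measure ℝ}
    {p : ℝ≥0∞} (hp0 : p ≠ 0) (hpt : p ≠ ⊤) :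
    eLpNorm (fun t => ∑ l, (I l).indicator (fun _ => a l) t) p μ
      ≤ (∑ l, ENNReal.ofReal ‖a l‖ ^ p.toReal * μ (I l)) ^ (1 / p.toReal) := by
  have hpR : 0 < p.toReal := ENNReal.toReal_pos hp0 hpt
  rw [eLpNorm_eq_lintegral_rpow_enorm_toReal hp0 hpt]
  apply ENNReal.rpow_le_rpow _ (by positivity)
  have hpt' : ∀ t : ℝ, ((‖(∑ l, (I l).indicator (fun _ => a l) t)‖₊ : ℝ≥0∞)) ^ p.toReal
      = ∑ l, (I l).indicator (fun _ => ENNReal.ofReal ‖a l‖ ^ p.toReal) t := by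
    intro t
    by_cases h : ∃ k, t ∈ I k
    · obtain ⟨k, hk⟩ := h
      rw [sum_indicator_eval hd a hk, sum_indicator_eval hd _ hk,
        ← enorm_eq_nnnorm, ← ofReal_norm]
    · push_neg at h
      rw [sum_indicator_eval_zero a h, sum_indicator_eval_zero _ h]
      simp [ENNReal.zero_rpow_of_pos hpR]
  calc ∫⁻ t, ((‖(∑ l, (I l).indicator (fun _ => a l) t)‖₊ : ℝ≥0∞)) ^ p.toReal ∂μ
      = ∫⁻ t, ∑ l, (I l).indicator (fun _ => ENNReal.ofReal ‖a l‖ ^ p.toReal) t ∂μ := by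
        exact lintegral_congr hpt'
    _ = ∑ l, ∫⁻ t, (I l).indicator (fun _ => ENNReal.ofReal ‖a l‖ ^ p.toReal) t ∂μ := by
        exact lintegral_finset_sum' _ fun l _ => (measurable_const.indicator (hI l)).aemeasurable
    _ = ∑ l, ENNReal.ofReal ‖a l‖ ^ p.toReal * μ (I l) := by
        refine Finset.sum_congr rfl fun l _ => ?_
        rw [lintegral_indicator (hI l), setLIntegral_const]
    _ ≤ ∑ l, ENNReal.ofReal ‖a l‖ ^ p.toReal * μ (I l) := le_refl _

lemma cell_exists {T δ : ℝ} {m : ℕ} (hm : 0 < m) (hδ : δ = T / m) (hT : 0 < T)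
    {t : ℝ} (ht : t ∈ Set.Ico (0:ℝ) T) :
    ∃ k : Fin m, t ∈ Set.Ico ((k:ℝ) * δ) (((k:ℝ) + 1) * δ) := by
  have hδ0 : 0 < δ := hδ ▸ div_pos hT (by exact_mod_cast hm)
  have hn : (Nat.floor (t / δ)) < m := by
    have h1 : t / δ < m := by
      rw [div_lt_iff₀ hδ0, hδ]
      field_simp
      exact ht.2
    exact (Nat.floor_lt (div_nonneg ht.1 hδ0.le)).2 h1
  have hfl : (↑(Nat.floor (t / δ)) : ℝ) * δ ≤ t := by
    rw [← le_div_iff₀ hδ0]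
    exact Nat.floor_le (div_nonneg ht.1 hδ0.le)
  have hfu : t < ((Nat.floor (t / δ) : ℝ) + 1) * δ := by
    rw [← div_lt_iff₀ hδ0]
    exact Nat.lt_floor_add_one (t / δ)
  exact ⟨⟨Nat.floor (t / δ), hn⟩, hfl, hfu⟩

lemma ennreal_rpow_split {x : ℝ≥0∞} (hx : x ≠ ⊤) {r : ℝ} (hr0 : 0 < r) :
    x ^ r = x ^ (r - 1) * x := by
  rcases eq_or_ne x 0 with rfl | hx0
  · rw [ENNReal.zero_rpow_of_pos hr0, mul_zero]
  · have h : x ^ (r - 1) * x ^ (1:ℝ) = x ^ r := by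
      rw [← ENNReal.rpow_add _ _ hx0 hx]
      ring_nf
    rw [← h, ENNReal.rpow_one]

lemma ennreal_rpow_absorb {x y : ℝ≥0∞} (hxy : x ≤ y) (hx : x ≠ ⊤) {r : ℝ} (hr : 1 ≤ r) :
    x ^ r ≤ y ^ (r - 1) * x := by
  rw [ennreal_rpow_split hx (lt_of_lt_of_le one_pos hr)]
  exact mul_le_mul_of_nonneg_right (ENNReal.rpow_le_rpow hxy (by linarith)) zero_le

end helpers


theorem ehrling {X B Y : Type*}
    [NormedAddCommGroup X] [NormedSpace ℝ X]
    [NormedAddCommGroup B] [NormedSpace ℝ B]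
    [NormedAddCommGroup Y] [NormedSpace ℝ Y]
    (i : X →L[ℝ] B) (hi_cpt : IsCompactOperator i)
    (j : B →L[ℝ] Y) (hj_inj : Function.Injective j)
    {η : ℝ} (hη : 0 < η) :
    ∃ C : ℝ, 0 ≤ C ∧ ∀ x : X, ‖i x‖ ≤ η * ‖x‖ + C * ‖j (i x)‖ := by
  by_contra hcon
  push_neg at hcon
  -- for each n : ℕ, get xₙ with ‖i xₙ‖ > η‖xₙ‖ + n‖j(i xₙ)‖
  have hseq : ∀ n : ℕ, ∃ y : X, ‖y‖ = 1 ∧ η + (n : ℝ) * ‖j (i y)‖ < ‖i y‖ := by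
    intro n
    obtain ⟨x, hx⟩ := hcon n (Nat.cast_nonneg n)
    have hx0 : x ≠ 0 := by
      rintro rfl
      simp at hx
    refine ⟨‖x‖⁻¹ • x, ?_, ?_⟩
    · simp [norm_smul, abs_of_nonneg, inv_mul_cancel₀ (norm_ne_zero_iff.2 hx0)]
    · have hnx : 0 < ‖x‖ := norm_pos_iff.2 hx0
      have : ‖i (‖x‖⁻¹ • x)‖ = ‖x‖⁻¹ * ‖i x‖ := by
        rw [i.map_smul, norm_smul, norm_inv, norm_norm]
      rw [this, i.map_smul, j.map_smul, norm_smul, norm_inv, norm_norm]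
      have := mul_lt_mul_of_pos_left hx (inv_pos.2 hnx)
      calc η + (n:ℝ) * (‖x‖⁻¹ * ‖j (i x)‖)
          = ‖x‖⁻¹ * (η * ‖x‖ + n * ‖j (i x)‖) := by field_simp
        _ < ‖x‖⁻¹ * ‖i x‖ := this
    done
  choose y hy1 hy2 using hseq
  -- i of the unit ball sits in a compact set
  have hK : IsCompact (closure (i '' Metric.closedBall 0 1)) :=
    IsCompactOperator.isCompact_closure_image_closedBall (f := (i : X →ₗ[ℝ] B)) hi_cpt 1
  have hmem : ∀ n, i (y n) ∈ closure (i '' Metric.closedBall 0 1) := by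
    intro n
    exact subset_closure ⟨y n, by simp [Metric.mem_closedBall, (hy1 n).le], rfl⟩
  obtain ⟨b, _, φ, hφ, hconv⟩ := hK.tendsto_subseq hmem
  -- j (i yₙ) → 0
  have hji : Filter.Tendsto (fun n => j (i (y (φ n)))) Filter.atTop (nhds 0) := by
    have hnorm : Filter.Tendsto (fun n => ‖j (i (y (φ n)))‖) Filter.atTop (nhds 0) := by
      have hb : ∀ n : ℕ, 1 ≤ n → ‖j (i (y (φ n)))‖ ≤ ‖i‖ / n := by
        intro n hn
        have h1 : ‖i (y (φ n))‖ ≤ ‖i‖ := by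
          calc ‖i (y (φ n))‖ ≤ ‖i‖ * ‖y (φ n)‖ := i.le_opNorm _
            _ = ‖i‖ := by rw [hy1, mul_one]
        have h2 : (φ n : ℝ) * ‖j (i (y (φ n)))‖ ≤ ‖i‖ := by
          nlinarith [hy2 (φ n), hη]
        have hφn : (n : ℝ) ≤ (φ n : ℝ) := by exact_mod_cast (hφ.le_apply)
        have hn0 : (0:ℝ) < n := by exact_mod_cast hn
        rw [le_div_iff₀ hn0]
        calc ‖j (i (y (φ n)))‖ * n = (n:ℝ) * ‖j (i (y (φ n)))‖ := by ring
          _ ≤ (φ n : ℝ) * ‖j (i (y (φ n)))‖ :=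
              mul_le_mul_of_nonneg_right hφn (norm_nonneg _)
          _ ≤ ‖i‖ := h2
      have h0 : Filter.Tendsto (fun n : ℕ => ‖i‖ / (n:ℝ)) Filter.atTop (nhds 0) :=
        tendsto_const_div_atTop_nhds_zero_nat _
      refine squeeze_zero' ?_ ?_ h0
      · exact Filter.Eventually.of_forall fun n => norm_nonneg _
      · filter_upwards [Filter.eventually_ge_atTop 1] with n hn using hb n hn
    exact tendsto_zero_iff_norm_tendsto_zero.2 hnorm
  have hjb : j b = 0 := by
    have : Filter.Tendsto (fun n => j (i (y (φ n)))) Filter.atTop (nhds (j b)) :=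
      (j.continuous.tendsto b).comp hconv
    exact tendsto_nhds_unique this hji
  have hb0 : b = 0 := hj_inj (by simp [hjb])
  -- but ‖i yₙ‖ ≥ η > 0
  have : η ≤ ‖b‖ := by
    have hle : ∀ n, η ≤ ‖i (y (φ n))‖ := by
      intro n
      have := hy2 (φ n)
      nlinarith [norm_nonneg (j (i (y (φ n)))), (Nat.cast_nonneg (φ n) : (0:ℝ) ≤ φ n)]
    have := le_of_tendsto_of_tendsto' (tendsto_const_nhds (x := η))
      (hconv.norm) hle
    exact this
  rw [hb0] at this
  simp at this
  linarith


set_option maxHeartbeats 2000000 in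
theorem stmt17
    {X B Y : Type*}
    [NormedAddCommGroup X] [NormedSpace ℝ X] [CompleteSpace X]
    [NormedAddCommGroup B] [NormedSpace ℝ B] [CompleteSpace B]
    [NormedAddCommGroup Y] [NormedSpace ℝ Y] [CompleteSpace Y]
    (i : X →L[ℝ] B) (hi_inj : Function.Injective i) (hi_cpt : IsCompactOperator i)
    (j : B →L[ℝ] Y) (hj_inj : Function.Injective j)
    (T : ℝ) (hT : 0 < T)
    (p : ℝ≥0∞) [Fact (1 ≤ p)] (hp : p ≠ ⊤)
    (𝓕 : Set (ℝ → X))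
    (hmeas : ∀ f ∈ 𝓕, AEStronglyMeasurable f (volume.restrict (Set.Icc (0:ℝ) T)))
    (hbdd : ∃ M : ℝ≥0∞, M ≠ ⊤ ∧
      ∀ f ∈ 𝓕, eLpNorm f p (volume.restrict (Set.Icc (0:ℝ) T)) ≤ M)
    (hderiv : ∃ M' : ℝ, ∀ f ∈ 𝓕, ∃ g : ℝ → Y,
      IntegrableOn g (Set.Icc (0:ℝ) T) ∧
      (∀ t ∈ Set.Icc (0:ℝ) T, j (i (f t)) = j (i (f 0)) + ∫ s in (0:ℝ)..t, g s) ∧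
      (∫ t in Set.Icc (0:ℝ) T, ‖g t‖) ≤ M') :
    IsCompact (closure {h : Lp B p (volume.restrict (Set.Icc (0:ℝ) T)) |
      ∃ f ∈ 𝓕, ⇑h =ᵐ[volume.restrict (Set.Icc (0:ℝ) T)] fun t => i (f t)}) := by
  classical
  obtain ⟨M, hMtop, hM⟩ := hbdd
  obtain ⟨M', hM'all⟩ := hderiv
  set μ := volume.restrict (Set.Icc (0:ℝ) T) with hμdef
  have hp1 : (1:ℝ≥0∞) ≤ p := Fact.out
  have hp0 : p ≠ 0 := (zero_lt_one.trans_le hp1).ne'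
  have hpR1 : (1:ℝ) ≤ p.toReal := by
    rw [← ENNReal.toReal_one]; exact ENNReal.toReal_mono hp hp1
  have hpR0 : (0:ℝ) < p.toReal := lt_of_lt_of_le one_pos hpR1
  haveI : IsFiniteMeasure μ := by
    constructor
    rw [hμdef, Measure.restrict_apply_univ, Real.volume_Icc]
    exact ENNReal.ofReal_lt_top
  have hμuniv : μ Set.univ = ENNReal.ofReal T := by
    rw [hμdef, Measure.restrict_apply_univ, Real.volume_Icc, sub_zero]
  have hμ0 : μ ≠ 0 := by
    intro h0
    rw [h0] at hμuniv
    simp only [Measure.coe_zero, Pi.zero_apply] at hμuniv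
    rw [eq_comm, ENNReal.ofReal_eq_zero] at hμuniv
    linarith
  have hmemLp : ∀ f ∈ 𝓕, MemLp f p μ := fun f hf =>
    ⟨hmeas f hf, lt_of_le_of_lt (hM f hf) (lt_top_iff_ne_top.2 hMtop)⟩
  have hintf : ∀ f ∈ 𝓕, IntegrableOn f (Set.Icc (0:ℝ) T) volume := fun f hf =>
    memLp_one_iff_integrable.1 ((hmemLp f hf).mono_exponent hp1)
  set L1e : ℝ≥0∞ := M * (ENNReal.ofReal T) ^ (1 - 1 / p.toReal) with hL1e
  have hL1etop : L1e ≠ ⊤ := by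
    apply ENNReal.mul_ne_top hMtop
    exact ENNReal.rpow_ne_top_of_nonneg (by
      rw [sub_nonneg]
      rw [div_le_one hpR0]
      exact hpR1) ENNReal.ofReal_ne_top
  have hL1 : ∀ f ∈ 𝓕, (∫ t in Set.Icc (0:ℝ) T, ‖f t‖) ≤ L1e.toReal := by
    intro f hf
    have h1 : eLpNorm f 1 μ ≤ L1e := by
      have h2 := eLpNorm_le_eLpNorm_mul_rpow_measure_univ hp1 (hmeas f hf)
      rw [hμuniv] at h2
      refine le_trans h2 ?_
      rw [hL1e]
      apply mul_le_mul' (hM f hf)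
      apply le_of_eq
      congr 1
      simp [ENNReal.toReal_one]
    have h2 : (∫ t in Set.Icc (0:ℝ) T, ‖f t‖) = (eLpNorm f 1 μ).toReal := by
      rw [eLpNorm_one_eq_lintegral_enorm]
      exact integral_norm_eq_lintegral_enorm (hmeas f hf)
    rw [h2]
    exact ENNReal.toReal_mono hL1etop h1
  -- start total boundedness
  refine TotallyBounded.isCompact_of_isClosed
    ((Metric.totallyBounded_iff.2 ?_).closure) isClosed_closure
  intro ε hε
  set ε5 := ε / 5 with hε5def
  have hε5pos : 0 < ε5 := by positivity
  set Mr := M.toReal with hMrdef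
  have hMreq : M = ENNReal.ofReal Mr := (ENNReal.ofReal_toReal hMtop).symm
  have hMr0 : (0:ℝ) ≤ Mr := ENNReal.toReal_nonneg
  set η := ε5 / (Mr + 1) with hηdef
  have hη : 0 < η := by positivity
  obtain ⟨C, hC0, hC⟩ := ehrling i hi_cpt j hj_inj hη
  set M'' := max M' 0 with hM''def
  have hM''0 : (0:ℝ) ≤ M'' := le_max_right _ _
  set γ := ε5 / (C * M'' + 1) with hγdef
  have hγ0 : 0 < γ := by positivity
  obtain ⟨m0, hm0⟩ := exists_nat_gt (T / γ ^ p.toReal)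
  set m := max m0 1 with hmdef
  have hm1 : 0 < m := lt_of_lt_of_le one_pos (le_max_right _ _)
  set δ := T / m with hδdef
  have hmR : (0:ℝ) < m := by exact_mod_cast hm1
  have hδ0 : 0 < δ := div_pos hT hmR
  have hδle : δ ≤ γ ^ p.toReal := by
    have hm0pos : (0:ℝ) < m0 := lt_trans (div_pos hT (by positivity)) hm0
    have h1 : T / (m:ℝ) ≤ T / m0 := by
      apply div_le_div_of_nonneg_left hT.le hm0pos
      exact_mod_cast le_max_left m0 1
    have h2 : T / (m0:ℝ) ≤ γ ^ p.toReal := by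
      rw [div_le_iff₀ hm0pos, mul_comm]
      have hγp : (0:ℝ) < γ ^ p.toReal := Real.rpow_pos_of_pos hγ0 _
      calc T = T / γ ^ p.toReal * γ ^ p.toReal := (div_mul_cancel₀ T hγp.ne').symm
        _ ≤ m0 * γ ^ p.toReal := mul_le_mul_of_nonneg_right hm0.le hγp.le
    exact le_trans h1 h2
  have hCap : C * δ ^ (1 / p.toReal) * M'' ≤ ε5 := by
    have h1 : δ ^ (1 / p.toReal) ≤ γ := by
      rw [one_div]
      calc δ ^ (p.toReal)⁻¹ ≤ (γ ^ p.toReal) ^ (p.toReal)⁻¹ :=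
            Real.rpow_le_rpow hδ0.le hδle (by positivity)
        _ = γ := Real.rpow_rpow_inv hγ0.le hpR0.ne'
    calc C * δ ^ (1 / p.toReal) * M'' ≤ C * γ * M'' := by
          apply mul_le_mul_of_nonneg_right _ hM''0
          exact mul_le_mul_of_nonneg_left h1 hC0
      _ ≤ ε5 := by
          rw [hγdef]
          have hre : C * (ε5 / (C * M'' + 1)) * M'' = C * M'' * ε5 / (C * M'' + 1) := by
            ring
          rw [hre, div_le_iff₀ (by positivity)]
          nlinarith [mul_nonneg hC0 hM''0]
  set ε2 := ε5 / (T ^ (1 / p.toReal) + 1) with hε2def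
  have hTp : (0:ℝ) < T ^ (1 / p.toReal) := Real.rpow_pos_of_pos hT _
  have hε2pos : 0 < ε2 := by positivity
  have hε2cap : ε2 * T ^ (1 / p.toReal) ≤ ε5 := by
    rw [hε2def, div_mul_eq_mul_div, div_le_iff₀ (by positivity)]
    nlinarith
  -- cells
  set I : Fin m → Set ℝ := fun k => Set.Ico ((k:ℝ) * δ) (((k:ℝ) + 1) * δ) with hIdef
  have hImeas : ∀ k, MeasurableSet (I k) := fun k => measurableSet_Ico
  have hIdisj : ∀ k l : Fin m, k ≠ l → Disjoint (I k) (I l) := by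
    intro k l hkl
    rw [hIdef]
    simp only []
    rw [Set.Ico_disjoint_Ico]
    rcases lt_or_gt_of_ne (fun hkl' : (k:ℕ) = (l:ℕ) => hkl (Fin.ext hkl')) with hlt | hlt
    · have hcast : ((k:ℝ)) + 1 ≤ (l:ℝ) := by
        have h' : (k:ℕ) + 1 ≤ (l:ℕ) := hlt
        exact_mod_cast h'
      refine le_trans (min_le_left _ _) (le_trans ?_ (le_max_right _ _))
      exact mul_le_mul_of_nonneg_right hcast hδ0.le
    · have hcast : ((l:ℝ)) + 1 ≤ (k:ℝ) := by
        have h' : (l:ℕ) + 1 ≤ (k:ℕ) := hlt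
        exact_mod_cast h'
      refine le_trans (min_le_right _ _) (le_trans ?_ (le_max_left _ _))
      exact mul_le_mul_of_nonneg_right hcast hδ0.le
  have hIsub : ∀ k, I k ⊆ Set.Icc (0:ℝ) T := by
    intro k x hx
    obtain ⟨hx1, hx2⟩ := hx
    have hk0 : (0:ℝ) ≤ (k:ℝ) := by exact_mod_cast Nat.zero_le (k:ℕ)
    constructor
    · exact le_trans (mul_nonneg hk0 hδ0.le) hx1
    · have hk1 : ((k:ℝ) + 1) ≤ (m:ℝ) := by
        have h' : (k:ℕ) + 1 ≤ m := k.isLt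
        exact_mod_cast h'
      have h2 : ((k:ℝ) + 1) * δ ≤ (m:ℝ) * δ := mul_le_mul_of_nonneg_right hk1 hδ0.le
      have hmδ : (m:ℝ) * δ = T := by
        rw [hδdef]
        field_simp
      linarith
  have hμI : ∀ k, μ (I k) = ENNReal.ofReal δ := by
    intro k
    rw [hμdef, Measure.restrict_apply (hImeas k),
      Set.inter_eq_self_of_subset_left (hIsub k)]
    rw [hIdef]
    simp only []
    rw [Real.volume_Ico]
    congr 1
    ring
  have hIcover : ∀ t ∈ Set.Ico (0:ℝ) T, ∃ k : Fin m, t ∈ I k := by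
    intro t ht
    exact cell_exists hm1 hδdef hT ht
  have haecover : ∀ᵐ t ∂μ, ∃ k : Fin m, t ∈ I k := by
    have h1 : ∀ᵐ t ∂μ, t ∈ Set.Icc (0:ℝ) T := ae_restrict_mem measurableSet_Icc
    have h2 : ∀ᵐ t ∂μ, t ≠ T := by
      have h3 : μ {T} = 0 := by
        rw [hμdef, Measure.restrict_apply (measurableSet_singleton T)]
        exact measure_mono_null Set.inter_subset_left Real.volume_singleton
      rw [ae_iff]
      convert h3 using 2
      simp
    filter_upwards [h1, h2] with t ht1 ht2
    exact hIcover t ⟨ht1.1, lt_of_le_of_ne ht1.2 ht2⟩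
  -- compact net
  set R := δ⁻¹ * L1e.toReal + 1 with hRdef
  have hKcpt : IsCompact (closure (i '' Metric.closedBall 0 R)) :=
    IsCompactOperator.isCompact_closure_image_closedBall (f := (i : X →ₗ[ℝ] B)) hi_cpt R
  obtain ⟨D, hDfin, hDcov⟩ := Metric.totallyBounded_iff.1 hKcpt.totallyBounded ε2 hε2pos
  have hΦmem : ∀ d : Fin m → B, MemLp (fun t => ∑ l, (I l).indicator (fun _ => d l) t) p μ := by
    intro d
    apply memLp_finsetSum
    intro l _
    exact memLp_indicator_const p (hImeas l) (d l) (Or.inr (by rw [hμI l]; exact ENNReal.ofReal_ne_top))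
  refine ⟨(fun d : Fin m → B => ((hΦmem d).toLp _)) '' (Set.pi Set.univ fun _ => D),
    (Set.Finite.pi fun _ => hDfin).image _, ?_⟩
  rintro h ⟨f, hf𝓕, hfh⟩
  obtain ⟨g, hgint, hgeq, hgbd⟩ := hM'all f hf𝓕
  have hfmem : MemLp f p μ := hmemLp f hf𝓕
  have hfint : IntegrableOn f (Set.Icc (0:ℝ) T) volume := hintf f hf𝓕
  have hfintI : ∀ k, IntegrableOn f (I k) volume := fun k => hfint.mono_set (hIsub k)
  set c : Fin m → X := fun k => ⨍ t in I k, f t with hcdef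
  -- cell averages facts
  have hνuniv : ∀ k, (volume.restrict (I k)) Set.univ = ENNReal.ofReal δ := by
    intro k
    rw [Measure.restrict_apply_univ]
    rw [hIdef, Real.volume_Ico]
    congr 1
    ring
  have hνtoReal : ∀ k, (volume.restrict (I k)).real Set.univ = δ := by
    intro k
    rw [measureReal_def, hνuniv k, ENNReal.toReal_ofReal hδ0.le]
  have hcnorm : ∀ k, ‖c k‖ ≤ δ⁻¹ * ∫ t in I k, ‖f t‖ := by
    intro k
    have h1 : c k = ((volume.restrict (I k)).real Set.univ)⁻¹ • ∫ t in I k, f t := by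
      simp only [hcdef]
      exact average_eq (μ := volume.restrict (I k)) f
    rw [h1, hνtoReal k, norm_smul, Real.norm_eq_abs, abs_of_nonneg (inv_nonneg.2 hδ0.le)]
    exact mul_le_mul_of_nonneg_left (norm_integral_le_integral_norm _)
      (inv_nonneg.2 hδ0.le)
  have hcR : ∀ k, ‖c k‖ ≤ R := by
    intro k
    have hd1 : (0:ℝ) ≤ δ⁻¹ := inv_nonneg.2 hδ0.le
    calc ‖c k‖ ≤ δ⁻¹ * ∫ t in I k, ‖f t‖ := hcnorm k
      _ ≤ δ⁻¹ * ∫ t in Set.Icc (0:ℝ) T, ‖f t‖ := by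
          apply mul_le_mul_of_nonneg_left _ hd1
          exact setIntegral_mono_set hfint.norm
            (Filter.Eventually.of_forall fun t => norm_nonneg _)
            ((hIsub k).eventuallyLE)
      _ ≤ δ⁻¹ * L1e.toReal := mul_le_mul_of_nonneg_left (hL1 f hf𝓕) hd1
      _ ≤ R := by rw [hRdef]; linarith
  have hJensen : ∀ k, δ * ‖c k‖ ^ p.toReal ≤ ∫ t in I k, ‖f t‖ ^ p.toReal := by
    intro k
    haveI hfinν : IsFiniteMeasure (volume.restrict (I k)) := by
      constructor
      rw [hνuniv k]
      exact ENNReal.ofReal_lt_top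
    haveI hneν : NeZero (volume.restrict (I k)) := by
      constructor
      intro h0
      have h1 := hνuniv k
      rw [h0] at h1
      simp only [Measure.coe_zero, Pi.zero_apply] at h1
      rw [eq_comm, ENNReal.ofReal_eq_zero] at h1
      linarith
    have hfik : Integrable f (volume.restrict (I k)) := hfintI k
    have hrpowint : Integrable (fun t => ‖f t‖ ^ p.toReal) (volume.restrict (I k)) := by
      have h1 : Integrable (fun t => ‖f t‖ ^ p.toReal) μ := hfmem.integrable_norm_rpow hp0 hp
      exact IntegrableOn.mono_set (h1 : IntegrableOn _ (Set.Icc (0:ℝ) T) volume) (hIsub k)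
    have havgeq : (⨍ t in I k, ‖f t‖) = δ⁻¹ * ∫ t in I k, ‖f t‖ := by
      rw [average_eq, hνtoReal k, smul_eq_mul]
    have havg : ‖c k‖ ≤ ⨍ t in I k, ‖f t‖ := by
      rw [havgeq]
      exact hcnorm k
    have hJ : (⨍ t in I k, ‖f t‖) ^ p.toReal ≤ ⨍ t in I k, ‖f t‖ ^ p.toReal := by
      refine (convexOn_rpow hpR1).map_average_le
        (continuousOn_id.rpow_const fun x _ => Or.inr hpR0.le) isClosed_Ici
        (Filter.Eventually.of_forall fun t => Set.mem_Ici.2 (norm_nonneg (f t)))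
        hfik.norm ?_
      exact hrpowint
    have h3 : ‖c k‖ ^ p.toReal ≤ ⨍ t in I k, ‖f t‖ ^ p.toReal :=
      le_trans (Real.rpow_le_rpow (norm_nonneg _) havg hpR0.le) hJ
    have h4 : (⨍ t in I k, ‖f t‖ ^ p.toReal) = δ⁻¹ * ∫ t in I k, ‖f t‖ ^ p.toReal := by
      rw [average_eq, hνtoReal k, smul_eq_mul]
    rw [h4] at h3
    calc δ * ‖c k‖ ^ p.toReal ≤ δ * (δ⁻¹ * ∫ t in I k, ‖f t‖ ^ p.toReal) :=
        mul_le_mul_of_nonneg_left h3 hδ0.le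
      _ = ∫ t in I k, ‖f t‖ ^ p.toReal := by
          field_simp
  -- the Y-estimate
  set G : Fin m → ℝ := fun k => ∫ s in I k, ‖g s‖ with hGdef
  have hG0 : ∀ k, 0 ≤ G k := fun k => integral_nonneg fun s => norm_nonneg _
  have hGM : ∀ k, G k ≤ M'' := by
    intro k
    calc G k ≤ ∫ s in Set.Icc (0:ℝ) T, ‖g s‖ :=
        setIntegral_mono_set hgint.norm
          (Filter.Eventually.of_forall fun s => norm_nonneg _)
          ((hIsub k).eventuallyLE)
      _ ≤ M' := hgbd
      _ ≤ M'' := le_max_left _ _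
  have hGsum : ∑ k, G k ≤ M'' := by
    have h1 : ∑ k, G k = ∫ s in ⋃ k ∈ Finset.univ, I k, ‖g s‖ := by
      rw [integral_biUnion_finset Finset.univ (fun k _ => hImeas k)
        (fun k _ l _ hkl => hIdisj k l hkl)
        (fun k _ => IntegrableOn.mono_set hgint.norm (hIsub k))]
    rw [h1]
    have h2 : (⋃ k ∈ Finset.univ, I k : Set ℝ) ⊆ Set.Icc (0:ℝ) T := by
      intro x hx
      simp only [Set.mem_iUnion] at hx
      obtain ⟨k, _, hk⟩ := hx
      exact hIsub k hk
    calc (∫ s in ⋃ k ∈ Finset.univ, I k, ‖g s‖)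
        ≤ ∫ s in Set.Icc (0:ℝ) T, ‖g s‖ :=
          setIntegral_mono_set hgint.norm
            (Filter.Eventually.of_forall fun s => norm_nonneg _)
            h2.eventuallyLE
      _ ≤ M' := hgbd
      _ ≤ M'' := le_max_left _ _
  have hY : ∀ k, ∀ t ∈ I k, ‖j (i (f t)) - j (i (c k))‖ ≤ G k := by
    intro k t ht
    haveI hfinν : IsFiniteMeasure (volume.restrict (I k)) := by
      constructor
      rw [hνuniv k]
      exact ENNReal.ofReal_lt_top
    set L := j.comp i with hLdef
    have hLapp : ∀ x : X, L x = j (i x) := fun x => rfl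
    have hLfint : Integrable (fun s => L (f s)) (volume.restrict (I k)) :=
      L.integrable_comp (hfintI k)
    have hjic : L (c k) = ⨍ s in I k, L (f s) := by
      have h1 : c k = ((volume.restrict (I k)).real Set.univ)⁻¹ • ∫ s in I k, f s := by
        simp only [hcdef]
        exact average_eq (μ := volume.restrict (I k)) f
      rw [h1, L.map_smul, ← L.integral_comp_comm (hfintI k), average_eq]
    have hdiff : ∀ s ∈ I k, ‖L (f t) - L (f s)‖ ≤ G k := by
      intro s hs
      have hts : t ∈ Set.Icc (0:ℝ) T := hIsub k ht
      have hss : s ∈ Set.Icc (0:ℝ) T := hIsub k hs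
      have hii : ∀ r ∈ Set.Icc (0:ℝ) T, IntervalIntegrable g volume 0 r := by
        intro r hr
        rw [intervalIntegrable_iff]
        apply IntegrableOn.mono_set hgint
        rw [Set.uIoc_of_le hr.1]
        exact fun x hx => ⟨le_of_lt hx.1, le_trans hx.2 hr.2⟩
      have heq : L (f t) - L (f s) = ∫ u in s..t, g u := by
        rw [hLapp, hLapp, hgeq t hts, hgeq s hss]
        rw [add_sub_add_left_eq_sub]
        exact intervalIntegral.integral_interval_sub_left (hii t hts) (hii s hss)
      rw [heq]
      have hsub : Set.uIoc s t ⊆ I k := by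
        intro x hx
        obtain ⟨hx1, hx2⟩ := hx
        constructor
        · have hm1 : (k:ℝ) * δ ≤ min s t := le_min hs.1 ht.1
          have := lt_of_le_of_lt hm1 hx1
          linarith
        · have hm2 : max s t < ((k:ℝ) + 1) * δ := max_lt hs.2 ht.2
          exact lt_of_le_of_lt hx2 hm2
      calc ‖∫ u in s..t, g u‖ ≤ ∫ u in Set.uIoc s t, ‖g u‖ :=
          intervalIntegral.norm_integral_le_integral_norm_uIoc
        _ ≤ ∫ u in I k, ‖g u‖ :=
            setIntegral_mono_set (IntegrableOn.mono_set hgint.norm (hIsub k))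
              (Filter.Eventually.of_forall fun u => norm_nonneg _)
              hsub.eventuallyLE
        _ = G k := rfl
    have havg_sub : (⨍ s in I k, (L (f t) - L (f s))) = L (f t) - ⨍ s in I k, L (f s) := by
      rw [average_eq, average_eq, integral_sub (integrable_const _) hLfint,
        integral_const, smul_sub, smul_smul, hνtoReal k,
        inv_mul_cancel₀ hδ0.ne', one_smul]
    have hnorm_avg : ‖⨍ s in I k, (L (f t) - L (f s))‖ ≤ G k := by
      rw [average_eq, hνtoReal k, norm_smul, Real.norm_eq_abs,
        abs_of_nonneg (inv_nonneg.2 hδ0.le)]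
      have hd1 : (0:ℝ) ≤ δ⁻¹ := inv_nonneg.2 hδ0.le
      calc δ⁻¹ * ‖∫ s in I k, (L (f t) - L (f s))‖
          ≤ δ⁻¹ * ∫ s in I k, ‖L (f t) - L (f s)‖ :=
            mul_le_mul_of_nonneg_left (norm_integral_le_integral_norm _) hd1
        _ ≤ δ⁻¹ * ∫ _ in I k, G k := by
            apply mul_le_mul_of_nonneg_left _ hd1
            apply setIntegral_mono_on
            · exact ((integrable_const _).sub hLfint).norm
            · exact integrable_const _
            · exact hImeas k
            · exact hdiff
        _ = δ⁻¹ * (δ * G k) := by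
            have hvol : volume.real (I k) = δ := by
              rw [measureReal_def, ← Measure.restrict_apply_univ]
              exact hνtoReal k
            rw [setIntegral_const, smul_eq_mul, hvol]
        _ = G k := by field_simp
    calc ‖j (i (f t)) - j (i (c k))‖ = ‖L (f t) - L (c k)‖ := by rw [hLapp, hLapp]
      _ = ‖⨍ s in I k, (L (f t) - L (f s))‖ := by rw [havg_sub, hjic]
      _ ≤ G k := hnorm_avg
  -- choose net points
  have hcK : ∀ k, i (c k) ∈ closure (i '' Metric.closedBall 0 R) := by
    intro k
    exact subset_closure ⟨c k, Metric.mem_closedBall.2 (by rw [dist_zero_right]; exact hcR k), rfl⟩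
  have hdchoice : ∀ k, ∃ dd ∈ D, dist (i (c k)) dd < ε2 := by
    intro k
    have := hDcov (hcK k)
    simpa using this
  choose d hdD hdist using hdchoice
  refine Set.mem_iUnion₂.2 ⟨(hΦmem d).toLp _, ⟨d, fun k _ => hdD k, rfl⟩, ?_⟩
  -- distance estimate
  rw [Metric.mem_ball, Lp.dist_def]
  have hcoe : eLpNorm (⇑h - ⇑((hΦmem d).toLp _)) p μ
      = eLpNorm (fun t => i (f t) - ∑ l, (I l).indicator (fun _ => d l) t) p μ := by
    apply eLpNorm_congr_ae
    filter_upwards [hfh, (hΦmem d).coeFn_toLp] with t h1 h2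
    simp [h1, h2]
  rw [hcoe]
  have hkey : eLpNorm (fun t => i (f t) - ∑ l, (I l).indicator (fun _ => d l) t) p μ
      < ENNReal.ofReal ε := by
    set u1 : ℝ → ℝ := fun t => ∑ l, (I l).indicator (fun _ => η * ‖c l‖) t with hu1def
    set u2 : ℝ → ℝ := fun t => ∑ l, (I l).indicator (fun _ => C * G l) t with hu2def
    have hptwise : ∀ᵐ t ∂μ, ‖i (f t) - ∑ l, (I l).indicator (fun _ => d l) t‖
        ≤ η * ‖f t‖ + (u1 t + (u2 t + ε2)) := by
      filter_upwards [haecover] with t htk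
      obtain ⟨k, htk⟩ := htk
      rw [sum_indicator_eval hIdisj d htk]
      have e1 : u1 t = η * ‖c k‖ := by
        rw [hu1def]
        exact sum_indicator_eval hIdisj _ htk
      have e2 : u2 t = C * G k := by
        rw [hu2def]
        exact sum_indicator_eval hIdisj _ htk
      rw [e1, e2]
      have h2 : ‖i (c k) - d k‖ < ε2 := by
        rw [← dist_eq_norm]
        exact hdist k
      have h3 : ‖i (f t) - i (c k)‖ ≤ η * ‖f t - c k‖ + C * ‖j (i (f t - c k))‖ := by
        rw [← map_sub i]
        exact hC _
      have h4 : C * ‖j (i (f t - c k))‖ ≤ C * G k := by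
        apply mul_le_mul_of_nonneg_left _ hC0
        rw [map_sub i, map_sub j]
        exact hY k t htk
      have h5 : η * ‖f t - c k‖ ≤ η * (‖f t‖ + ‖c k‖) :=
        mul_le_mul_of_nonneg_left (norm_sub_le _ _) hη.le
      have h6 : ‖i (f t) - d k‖ ≤ ‖i (f t) - i (c k)‖ + ‖i (c k) - d k‖ :=
        norm_sub_le_norm_sub_add_norm_sub _ _ _
      have h7 : η * (‖f t‖ + ‖c k‖) = η * ‖f t‖ + η * ‖c k‖ := by ring
      linarith
    have hAESM1 : AEStronglyMeasurable (fun t => η * ‖f t‖) μ :=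
      (hmeas f hf𝓕).norm.const_mul η
    have hSMu1 : AEStronglyMeasurable u1 μ :=
      (Finset.stronglyMeasurable_fun_sum Finset.univ
        (fun l _ => stronglyMeasurable_const.indicator (hImeas l))).aestronglyMeasurable
    have hSMu2 : AEStronglyMeasurable u2 μ :=
      (Finset.stronglyMeasurable_fun_sum Finset.univ
        (fun l _ => stronglyMeasurable_const.indicator (hImeas l))).aestronglyMeasurable
    have hAESMc : AEStronglyMeasurable (fun _ : ℝ => ε2) μ := aestronglyMeasurable_const
    have hηM : ENNReal.ofReal η * M ≤ ENNReal.ofReal ε5 := by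
      rw [hMreq, ← ENNReal.ofReal_mul hη.le]
      apply ENNReal.ofReal_le_ofReal
      rw [hηdef, div_mul_eq_mul_div, div_le_iff₀ (by positivity)]
      nlinarith
    have hlpf : (∫⁻ t, (‖f t‖₊ : ℝ≥0∞) ^ p.toReal ∂μ) ≤ M ^ p.toReal := by
      have h1 : (∫⁻ t, (‖f t‖₊ : ℝ≥0∞) ^ p.toReal ∂μ) = eLpNorm f p μ ^ p.toReal := by
        rw [eLpNorm_eq_lintegral_rpow_enorm_toReal hp0 hp, one_div, ENNReal.rpow_inv_rpow hpR0.ne']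
        rfl
      rw [h1]
      exact ENNReal.rpow_le_rpow (hM f hf𝓕) hpR0.le
    have hcell : ∀ l, ENNReal.ofReal ‖c l‖ ^ p.toReal * ENNReal.ofReal δ
        ≤ ∫⁻ t in I l, (‖f t‖₊ : ℝ≥0∞) ^ p.toReal ∂volume := by
      intro l
      have hrpowint : Integrable (fun t => ‖f t‖ ^ p.toReal) (volume.restrict (I l)) :=
        IntegrableOn.mono_set (hfmem.integrable_norm_rpow hp0 hp :
          IntegrableOn _ (Set.Icc (0:ℝ) T) volume) (hIsub l)
      have h1 : ENNReal.ofReal (δ * ‖c l‖ ^ p.toReal)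
          ≤ ENNReal.ofReal (∫ t in I l, ‖f t‖ ^ p.toReal) :=
        ENNReal.ofReal_le_ofReal (hJensen l)
      have h2 : ENNReal.ofReal (∫ t in I l, ‖f t‖ ^ p.toReal)
          = ∫⁻ t in I l, (‖f t‖₊ : ℝ≥0∞) ^ p.toReal ∂volume := by
        rw [ofReal_integral_eq_lintegral_ofReal hrpowint
          (Filter.Eventually.of_forall fun t => by positivity)]
        apply lintegral_congr
        intro t
        rw [← enorm_eq_nnnorm, ← ofReal_norm,
          ← ENNReal.ofReal_rpow_of_nonneg (norm_nonneg _) hpR0.le]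
      calc ENNReal.ofReal ‖c l‖ ^ p.toReal * ENNReal.ofReal δ
          = ENNReal.ofReal (δ * ‖c l‖ ^ p.toReal) := by
            rw [ENNReal.ofReal_mul hδ0.le,
              ← ENNReal.ofReal_rpow_of_nonneg (norm_nonneg _) hpR0.le, mul_comm]
        _ ≤ _ := le_trans h1 (le_of_eq h2)
    have hsumcell : ∑ l, ∫⁻ t in I l, (‖f t‖₊ : ℝ≥0∞) ^ p.toReal ∂volume ≤ M ^ p.toReal := by
      calc ∑ l, ∫⁻ t in I l, (‖f t‖₊ : ℝ≥0∞) ^ p.toReal ∂volume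
          = ∑' l, ∫⁻ t in I l, (‖f t‖₊ : ℝ≥0∞) ^ p.toReal ∂volume := (tsum_fintype _).symm
        _ = ∫⁻ t in ⋃ l, I l, (‖f t‖₊ : ℝ≥0∞) ^ p.toReal ∂volume :=
            (lintegral_iUnion hImeas (fun k l hkl => hIdisj k l hkl) _).symm
        _ ≤ ∫⁻ t in Set.Icc (0:ℝ) T, (‖f t‖₊ : ℝ≥0∞) ^ p.toReal ∂volume :=
            lintegral_mono_set (Set.iUnion_subset hIsub)
        _ ≤ M ^ p.toReal := hlpf
    have bA : eLpNorm (fun t => η * ‖f t‖) p μ ≤ ENNReal.ofReal ε5 := by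
      have h1 : eLpNorm (fun t => η * ‖f t‖) p μ = (‖η‖₊ : ℝ≥0∞) * eLpNorm f p μ := by
        have h0 : (fun t => η * ‖f t‖) = η • (fun t => ‖f t‖) := rfl
        rw [h0, eLpNorm_const_smul, eLpNorm_norm]
        rfl
      have h2 : (‖η‖₊ : ℝ≥0∞) = ENNReal.ofReal η := by
        rw [← enorm_eq_nnnorm, ← ofReal_norm, Real.norm_eq_abs, abs_of_nonneg hη.le]
      rw [h1, h2]
      exact le_trans (mul_le_mul' (le_refl _) (hM f hf𝓕)) hηM
    have bB1 : eLpNorm u1 p μ ≤ ENNReal.ofReal ε5 := by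
      refine le_trans (step_eLpNorm_le hImeas hIdisj _ hp0 hp) ?_
      have h1 : ∑ l, ENNReal.ofReal ‖η * ‖c l‖‖ ^ p.toReal * μ (I l)
          ≤ (ENNReal.ofReal η * M) ^ p.toReal := by
        have h2 : ∀ l : Fin m, ENNReal.ofReal ‖η * ‖c l‖‖ ^ p.toReal * μ (I l)
            = ENNReal.ofReal η ^ p.toReal
              * (ENNReal.ofReal ‖c l‖ ^ p.toReal * ENNReal.ofReal δ) := by
          intro l
          rw [hμI l, Real.norm_eq_abs, abs_of_nonneg (by positivity),
            ENNReal.ofReal_mul hη.le, ENNReal.mul_rpow_of_nonneg _ _ hpR0.le]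
          ring
        calc ∑ l, ENNReal.ofReal ‖η * ‖c l‖‖ ^ p.toReal * μ (I l)
            = ∑ l, ENNReal.ofReal η ^ p.toReal
                * (ENNReal.ofReal ‖c l‖ ^ p.toReal * ENNReal.ofReal δ) :=
              Finset.sum_congr rfl fun l _ => h2 l
          _ ≤ ∑ l, ENNReal.ofReal η ^ p.toReal
                * ∫⁻ t in I l, (‖f t‖₊ : ℝ≥0∞) ^ p.toReal ∂volume :=
              Finset.sum_le_sum fun l _ => mul_le_mul' (le_refl _) (hcell l)
          _ = ENNReal.ofReal η ^ p.toReal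
                * ∑ l, ∫⁻ t in I l, (‖f t‖₊ : ℝ≥0∞) ^ p.toReal ∂volume :=
              (Finset.mul_sum _ _ _).symm
          _ ≤ ENNReal.ofReal η ^ p.toReal * M ^ p.toReal :=
              mul_le_mul' (le_refl _) hsumcell
          _ = (ENNReal.ofReal η * M) ^ p.toReal :=
              (ENNReal.mul_rpow_of_nonneg _ _ hpR0.le).symm
      refine le_trans (ENNReal.rpow_le_rpow h1 (by positivity)) ?_
      rw [one_div, ENNReal.rpow_rpow_inv hpR0.ne']
      exact hηM
    have bB2 : eLpNorm u2 p μ ≤ ENNReal.ofReal ε5 := by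
      refine le_trans (step_eLpNorm_le hImeas hIdisj _ hp0 hp) ?_
      have key : ∑ l, ENNReal.ofReal ‖C * G l‖ ^ p.toReal * μ (I l)
          ≤ (ENNReal.ofReal C * ENNReal.ofReal M'') ^ p.toReal * ENNReal.ofReal δ := by
        have h2 : ∀ l : Fin m, ENNReal.ofReal ‖C * G l‖ ^ p.toReal * μ (I l)
            = ENNReal.ofReal C ^ p.toReal * ENNReal.ofReal (G l) ^ p.toReal
              * ENNReal.ofReal δ := by
          intro l
          rw [hμI l, Real.norm_eq_abs, abs_of_nonneg (mul_nonneg hC0 (hG0 l)),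
            ENNReal.ofReal_mul hC0, ENNReal.mul_rpow_of_nonneg _ _ hpR0.le]
        have h3 : ∀ l : Fin m, ENNReal.ofReal (G l) ^ p.toReal
            ≤ ENNReal.ofReal M'' ^ (p.toReal - 1) * ENNReal.ofReal (G l) :=
          fun l => ennreal_rpow_absorb (ENNReal.ofReal_le_ofReal (hGM l))
            ENNReal.ofReal_ne_top hpR1
        have h4 : ∑ l, ENNReal.ofReal (G l) ≤ ENNReal.ofReal M'' := by
          rw [← ENNReal.ofReal_sum_of_nonneg (fun l _ => hG0 l)]
          exact ENNReal.ofReal_le_ofReal hGsum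
        calc ∑ l, ENNReal.ofReal ‖C * G l‖ ^ p.toReal * μ (I l)
            = ∑ l, ENNReal.ofReal C ^ p.toReal * ENNReal.ofReal (G l) ^ p.toReal
                * ENNReal.ofReal δ :=
              Finset.sum_congr rfl fun l _ => h2 l
          _ ≤ ∑ l, ENNReal.ofReal C ^ p.toReal
                * (ENNReal.ofReal M'' ^ (p.toReal - 1) * ENNReal.ofReal (G l))
                * ENNReal.ofReal δ :=
              Finset.sum_le_sum fun l _ =>
                mul_le_mul' (mul_le_mul' (le_refl _) (h3 l)) (le_refl _)
          _ = ENNReal.ofReal C ^ p.toReal * ENNReal.ofReal M'' ^ (p.toReal - 1)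
                * ENNReal.ofReal δ * ∑ l, ENNReal.ofReal (G l) := by
              rw [Finset.mul_sum]
              refine Finset.sum_congr rfl fun l _ => ?_
              ring
          _ ≤ ENNReal.ofReal C ^ p.toReal * ENNReal.ofReal M'' ^ (p.toReal - 1)
                * ENNReal.ofReal δ * ENNReal.ofReal M'' :=
              mul_le_mul' (le_refl _) h4
          _ = (ENNReal.ofReal C * ENNReal.ofReal M'') ^ p.toReal * ENNReal.ofReal δ := by
              rw [ENNReal.mul_rpow_of_nonneg _ _ hpR0.le,
                ennreal_rpow_split (x := ENNReal.ofReal M'') ENNReal.ofReal_ne_top hpR0]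
              ring
      refine le_trans (ENNReal.rpow_le_rpow key (by positivity)) ?_
      rw [ENNReal.mul_rpow_of_nonneg _ _ (by positivity), one_div,
        ENNReal.rpow_rpow_inv hpR0.ne']
      have h6 : ENNReal.ofReal δ ^ (p.toReal)⁻¹ = ENNReal.ofReal (δ ^ (p.toReal)⁻¹) := by
        rw [← ENNReal.ofReal_rpow_of_pos hδ0]
      rw [h6, ← ENNReal.ofReal_mul hC0, ← ENNReal.ofReal_mul (mul_nonneg hC0 hM''0)]
      apply ENNReal.ofReal_le_ofReal
      calc C * M'' * δ ^ (p.toReal)⁻¹ = C * δ ^ (1/p.toReal) * M'' := by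
            rw [one_div]
            ring
        _ ≤ ε5 := hCap
    have bB3 : eLpNorm (fun _ : ℝ => ε2) p μ ≤ ENNReal.ofReal ε5 := by
      rw [eLpNorm_const _ hp0 hμ0, hμuniv]
      have h2 : ‖ε2‖ₑ = ENNReal.ofReal ε2 := by
        rw [← ofReal_norm, Real.norm_eq_abs, abs_of_nonneg hε2pos.le]
      rw [h2, ENNReal.ofReal_rpow_of_pos hT, ← ENNReal.ofReal_mul hε2pos.le]
      exact ENNReal.ofReal_le_ofReal hε2cap
    have hfeq : (fun t => η * ‖f t‖ + (u1 t + (u2 t + ε2)))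
        = (fun t => η * ‖f t‖) + (u1 + (u2 + (fun _ => ε2))) := rfl
    calc eLpNorm (fun t => i (f t) - ∑ l, (I l).indicator (fun _ => d l) t) p μ
        ≤ eLpNorm (fun t => η * ‖f t‖ + (u1 t + (u2 t + ε2))) p μ := by
          apply eLpNorm_mono_ae
          filter_upwards [hptwise] with t ht
          rw [Real.norm_eq_abs]
          exact le_trans ht (le_abs_self _)
      _ ≤ eLpNorm (fun t => η * ‖f t‖) p μ
            + (eLpNorm u1 p μ + (eLpNorm u2 p μ + eLpNorm (fun _ : ℝ => ε2) p μ)) := by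
          rw [hfeq]
          refine le_trans (eLpNorm_add_le hAESM1
            (hSMu1.add (hSMu2.add hAESMc)) hp1) ?_
          refine add_le_add_right ?_ _
          refine le_trans (eLpNorm_add_le hSMu1 (hSMu2.add hAESMc) hp1) ?_
          refine add_le_add_right ?_ _
          exact eLpNorm_add_le hSMu2 hAESMc hp1
      _ ≤ ENNReal.ofReal ε5
            + (ENNReal.ofReal ε5 + (ENNReal.ofReal ε5 + ENNReal.ofReal ε5)) := by
          exact add_le_add bA (add_le_add bB1 (add_le_add bB2 bB3))
      _ = ENNReal.ofReal (ε5 + (ε5 + (ε5 + ε5))) := by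
          rw [ENNReal.ofReal_add hε5pos.le (by positivity),
            ENNReal.ofReal_add hε5pos.le (by positivity),
            ENNReal.ofReal_add hε5pos.le (by positivity)]
      _ < ENNReal.ofReal ε := by
          rw [ENNReal.ofReal_lt_ofReal_iff hε]
          rw [hε5def]
          linarith
  exact ENNReal.toReal_lt_of_lt_ofReal hkey
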